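/- For every n ≥ 3 there exists a collection of 2n - 2 pairwise non-intersecting lines in ℝ^n such that the distance between any two distinct lines in the collection is exactly 1. -/

import Mathlib

open Real Finset

noncomputable def chC (m : ℕ) : ℝ := (1 + Real.sqrt (m+1)) / (Real.sqrt 2 * m)

lemma s2_sq : ((Real.sqrt 2)⁻¹:ℝ)^2 = 1/2 := by
  rw [inv_pow, Real.sq_sqrt (by norm_num : (2:ℝ) ≥ 0)]; norm_num

lemma chC_id (m : ℕ) (hm : 1 ≤ m) : (m:ℝ) * chC m ^ 2 - Real.sqrt 2 * chC m = 1/2 := by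
  have hm' : (m:ℝ) ≥ 1 := by exact_mod_cast hm
  have h2 : Real.sqrt 2 ^ 2 = 2 := Real.sq_sqrt (by norm_num)
  have h2' : Real.sqrt 2 ≠ 0 := by positivity
  have hs : Real.sqrt ((m:ℝ)+1) ^ 2 = (m:ℝ)+1 := Real.sq_sqrt (by positivity)
  have hm0 : (m:ℝ) ≠ 0 := by linarith
  rw [chC]
  field_simp
  linear_combination (-2*Real.sqrt ((m:ℝ)+1) - 2 - (m:ℝ)) * h2 + 2 * hs

noncomputable def chV (m : ℕ) (i r : ℕ) : ℝ :=
  if i < m then (if r = i then (Real.sqrt 2)⁻¹ else 0) else chC m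

lemma chV_sum (m : ℕ) (hm : 1 ≤ m) (i j : ℕ) (hi : i < m + 1) (hj : j < m + 1)
    (hij : i ≠ j) : ∑ r ∈ Finset.range m, (chV m i r - chV m j r)^2 = 1 := by
  have mixed : ∀ a : ℕ, a < m → ∑ r ∈ Finset.range m, (chV m a r - chV m m r)^2 = 1 := by
    intro a ha
    have : ∀ r ∈ Finset.range m, (chV m a r - chV m m r)^2
        = chC m ^2 + (if r = a then ((Real.sqrt 2)⁻¹ - chC m)^2 - chC m ^2 else 0) := by
      intro r _
      simp only [chV, if_pos ha, if_neg (lt_irrefl m)]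
      split_ifs with h
      · ring
      · ring
    rw [Finset.sum_congr rfl this, Finset.sum_add_distrib, Finset.sum_const,
      Finset.sum_ite_eq' _ a, if_pos (Finset.mem_range.2 ha)]
    have := chC_id m hm
    have := s2_sq
    have h2 : (2:ℝ) * (Real.sqrt 2)⁻¹ * chC m = Real.sqrt 2 * chC m := by
      have h2' : Real.sqrt 2 ≠ 0 := by positivity
      have : (2:ℝ) * (Real.sqrt 2)⁻¹ = Real.sqrt 2 := by
        field_simp
        rw [Real.sq_sqrt (by norm_num : (2:ℝ) ≥ 0)]
      rw [this]
    simp only [Finset.card_range, nsmul_eq_mul]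
    nlinarith [chC_id m hm, s2_sq]
  rcases Nat.lt_or_ge i m with hi' | hi'
  · rcases Nat.lt_or_ge j m with hj' | hj'
    · -- both < m
      have : ∀ r ∈ Finset.range m, (chV m i r - chV m j r)^2
          = (if r = i then (1:ℝ)/2 else 0) + (if r = j then (1:ℝ)/2 else 0) := by
        intro r _
        simp only [chV, if_pos hi', if_pos hj']
        split_ifs with h1 h2
        · exact absurd (h1 ▸ h2 ▸ rfl : i = j) hij
        · rw [← s2_sq]; ring
        · rw [← s2_sq]; ring
        · ring
      rw [Finset.sum_congr rfl this, Finset.sum_add_distrib,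
        Finset.sum_ite_eq' _ i, Finset.sum_ite_eq' _ j,
        if_pos (Finset.mem_range.2 hi'), if_pos (Finset.mem_range.2 hj')]
      norm_num
    · have hj'' : j = m := by omega
      subst hj''; exact mixed i hi'
  · have hj' : j < m := by omega
    rw [show i = m from by omega, ← mixed j hj']
    exact Finset.sum_congr rfl (fun r _ => by ring)

noncomputable def chT (q i : ℕ) : ℝ := i * Real.pi / q

lemma sin_chT_ne (q i j : ℕ) (hq : 1 ≤ q) (hi : i < q) (hj : j < q) (hij : i ≠ j) :
    Real.sin (chT q i - chT q j) ≠ 0 := by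
  have hq' : (0:ℝ) < q := by exact_mod_cast hq
  have key : ∀ a b : ℕ, a < b → b < q → Real.sin (chT q b - chT q a) ≠ 0 := by
    intro a b hab hb
    have h1 : chT q b - chT q a = ((b:ℝ) - a) * Real.pi / q := by
      rw [chT, chT]; ring
    have hba : (0:ℝ) < (b:ℝ) - a := by
      have : (a:ℝ) < b := by exact_mod_cast hab
      linarith
    have hba2 : (b:ℝ) - a < q := by
      have : (b:ℝ) < q := by exact_mod_cast hb
      have : (0:ℝ) ≤ a := Nat.cast_nonneg a
      linarith
    have hpos : 0 < Real.sin (chT q b - chT q a) := by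
      rw [h1]
      apply Real.sin_pos_of_pos_of_lt_pi
      · positivity
      · rw [div_lt_iff₀ hq']
        nlinarith [Real.pi_pos]
    exact ne_of_gt hpos
  rcases Nat.lt_or_ge i j with h | h
  · have := key i j h hj
    rw [show chT q i - chT q j = -(chT q j - chT q i) from by ring, Real.sin_neg]
    exact neg_ne_zero.2 this
  · exact key j i (by omega) hi

lemma lines_meet (a b w₁ w₂ : ℝ) (hD : Real.sin (a - b) ≠ 0) :
    ∃ t s : ℝ, t * Real.cos a - s * Real.cos b = w₁ ∧
      t * Real.sin a - s * Real.sin b = w₂ := by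
  have hD' : Real.sin a * Real.cos b - Real.cos a * Real.sin b ≠ 0 := by
    rw [← Real.sin_sub]; exact hD
  refine ⟨(w₂ * Real.cos b - w₁ * Real.sin b) / (Real.sin a * Real.cos b - Real.cos a * Real.sin b),
    (w₂ * Real.cos a - w₁ * Real.sin a) / (Real.sin a * Real.cos b - Real.cos a * Real.sin b), ?_, ?_⟩ <;>
  · rw [div_mul_eq_mul_div, div_mul_eq_mul_div, div_sub_div_same, div_eq_iff hD']
    ring

noncomputable def chPf (n i : ℕ) (α t : ℝ) : ℕ → ℝ := fun k =>
  if k < n - 2 then chV (n-2) i k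
  else if k = n - 2 then α * (-Real.sin (chT (n-1) i)) + t * Real.cos (chT (n-1) i)
  else α * Real.cos (chT (n-1) i) + t * Real.sin (chT (n-1) i)

noncomputable def chP (n i : ℕ) (α t : ℝ) : EuclideanSpace ℝ (Fin n) :=
  WithLp.toLp 2 (fun k => chPf n i α t k.val)

noncomputable def chD (n i : ℕ) : EuclideanSpace ℝ (Fin n) := WithLp.toLp 2 (fun k =>
  if (k:ℕ) = n - 2 then Real.cos (chT (n-1) i)
  else if (k:ℕ) = n - 1 then Real.sin (chT (n-1) i) else 0)

lemma chP_line (n : ℕ) (hn : 3 ≤ n) (i : ℕ) (α t : ℝ) :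
    chP n i α 0 + t • chD n i = chP n i α t := by
  apply PiLp.ext; intro k
  have hk : (k:ℕ) < n := k.isLt
  show chPf n i α 0 k.val + t * chD n i k = chPf n i α t k.val
  simp only [chPf, chD, PiLp.toLp_apply]
  split_ifs
  all_goals (try (exfalso; omega))
  all_goals ring

lemma dist_chP (n : ℕ) (hn : 3 ≤ n) (i j : ℕ) (α β t s : ℝ) :
    dist (chP n i α t) (chP n j β s) = Real.sqrt (
      (∑ r ∈ Finset.range (n-2), (chV (n-2) i r - chV (n-2) j r)^2)
      + ((α * (-Real.sin (chT (n-1) i)) + t * Real.cos (chT (n-1) i))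
          - (β * (-Real.sin (chT (n-1) j)) + s * Real.cos (chT (n-1) j)))^2
      + ((α * Real.cos (chT (n-1) i) + t * Real.sin (chT (n-1) i))
          - (β * Real.cos (chT (n-1) j) + s * Real.sin (chT (n-1) j)))^2) := by
  obtain ⟨m, rfl⟩ : ∃ m, n = m + 2 := ⟨n - 2, by omega⟩
  rw [show m + 2 - 2 = m from rfl, show m + 2 - 1 = m + 1 from rfl]
  rw [EuclideanSpace.dist_eq]
  congr 1
  have key : ∀ k : Fin (m+2), dist (chP (m+2) i α t k) (chP (m+2) j β s k) ^ 2
      = (chPf (m+2) i α t k.val - chPf (m+2) j β s k.val)^2 := by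
    intro k
    rw [show chP (m+2) i α t k = chPf (m+2) i α t k.val from rfl,
        show chP (m+2) j β s k = chPf (m+2) j β s k.val from rfl,
        Real.dist_eq, sq_abs]
  rw [Finset.sum_congr rfl (fun k _ => key k),
    Fin.sum_univ_eq_sum_range (fun r => (chPf (m+2) i α t r - chPf (m+2) j β s r)^2) (m+2),
    Finset.sum_range_succ, Finset.sum_range_succ]
  have hm2 : m + 2 - 2 = m := by omega
  have hm1 : m + 2 - 1 = m + 1 := by omega
  have e1 : ∀ r ∈ Finset.range m, (chPf (m+2) i α t r - chPf (m+2) j β s r)^2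
      = (chV m i r - chV m j r)^2 := by
    intro r hr
    have hr' : r < m := Finset.mem_range.1 hr
    simp only [chPf, hm2]
    rw [if_pos hr', if_pos hr']
  rw [Finset.sum_congr rfl e1]
  have eA : ∀ (i' : ℕ) (γ u : ℝ), chPf (m+2) i' γ u m
      = γ * (-Real.sin (chT (m+1) i')) + u * Real.cos (chT (m+1) i') := by
    intro i' γ u
    simp [chPf, hm2, hm1]
  have eB : ∀ (i' : ℕ) (γ u : ℝ), chPf (m+2) i' γ u (m+1)
      = γ * Real.cos (chT (m+1) i') + u * Real.sin (chT (m+1) i') := by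
    intro i' γ u
    simp [chPf, hm2, hm1]
  rw [eA, eA, eB, eB]

lemma two_dim_sq (θ u v : ℝ) :
    (u * (-Real.sin θ) + v * Real.cos θ)^2 + (u * Real.cos θ + v * Real.sin θ)^2
      = u^2 + v^2 := by
  linear_combination (u^2+v^2) * Real.sin_sq_add_cos_sq θ

lemma dist_par (n : ℕ) (hn : 3 ≤ n) (i : ℕ) (α β : ℝ) (h : (α - β)^2 = 1) :
    dist (chP n i α 0) (chP n i β 0) = 1 := by
  rw [dist_chP n hn i i α β 0 0]
  have h0 : ∑ r ∈ Finset.range (n-2), (chV (n-2) i r - chV (n-2) i r)^2 = 0 := by simp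
  rw [h0]
  have key : (0:ℝ)
      + ((α * (-Real.sin (chT (n-1) i)) + 0 * Real.cos (chT (n-1) i))
          - (β * (-Real.sin (chT (n-1) i)) + 0 * Real.cos (chT (n-1) i)))^2
      + ((α * Real.cos (chT (n-1) i) + 0 * Real.sin (chT (n-1) i))
          - (β * Real.cos (chT (n-1) i) + 0 * Real.sin (chT (n-1) i)))^2 = 1 := by
    linear_combination (α-β)^2 * Real.sin_sq_add_cos_sq (chT (n-1) i) + h
  rw [key, Real.sqrt_one]

lemma dist_cross (n : ℕ) (hn : 3 ≤ n) (i j : ℕ) (hi : i < n-1) (hj : j < n-1)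
    (hij : i ≠ j) (α β : ℝ) :
    ∃ t s : ℝ, dist (chP n i α t) (chP n j β s) = 1 := by
  obtain ⟨t, s, h1, h2⟩ := lines_meet (chT (n-1) i) (chT (n-1) j)
    (β * (-Real.sin (chT (n-1) j)) - α * (-Real.sin (chT (n-1) i)))
    (β * Real.cos (chT (n-1) j) - α * Real.cos (chT (n-1) i))
    (sin_chT_ne (n-1) i j (by omega) hi hj hij)
  refine ⟨t, s, ?_⟩
  rw [dist_chP n hn i j α β t s,
    chV_sum (n-2) (by omega) i j (by omega) (by omega) hij]
  have e1 : (α * (-Real.sin (chT (n-1) i)) + t * Real.cos (chT (n-1) i))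
      - (β * (-Real.sin (chT (n-1) j)) + s * Real.cos (chT (n-1) j)) = 0 := by
    linear_combination h1
  have e2 : (α * Real.cos (chT (n-1) i) + t * Real.sin (chT (n-1) i))
      - (β * Real.cos (chT (n-1) j) + s * Real.sin (chT (n-1) j)) = 0 := by
    linear_combination h2
  rw [e1, e2]
  norm_num

/-- For every `n ≥ 3` there is a collection of `2n - 2` pairwise non-intersecting lines
in `ℝⁿ` such that the distance between any two distinct lines is exactly 1 (i.e. all
pairwise point distances are at least 1, and distance 1 is attained). -/
theorem champagne_lower_bound (n : ℕ) (hn : 3 ≤ n) :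
    ∃ L : Fin (2 * n - 2) → Set (EuclideanSpace ℝ (Fin n)),
      (∀ k, ∃ (p d : EuclideanSpace ℝ (Fin n)), d ≠ 0 ∧
        L k = {x | ∃ t : ℝ, x = p + t • d}) ∧
      ∀ k l, k ≠ l →
        L k ∩ L l = ∅ ∧
        (∀ p ∈ L k, ∀ q ∈ L l, 1 ≤ dist p q) ∧
        (∃ p ∈ L k, ∃ q ∈ L l, dist p q = 1) := by
  refine ⟨fun k => {x | ∃ t : ℝ,
      x = chP n ((k:ℕ)/2) ((((k:ℕ) % 2 : ℕ)) : ℝ) 0 + t • chD n ((k:ℕ)/2)}, ?_, ?_⟩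
  · intro k
    refine ⟨_, _, ?_, rfl⟩
    intro h
    have h1 : chD n ((k:ℕ)/2) (⟨n-2, by omega⟩ : Fin n) = 0 := by rw [h]; rfl
    have h2 : chD n ((k:ℕ)/2) (⟨n-1, by omega⟩ : Fin n) = 0 := by rw [h]; rfl
    have hc : Real.cos (chT (n-1) ((k:ℕ)/2)) = 0 := by
      simpa [chD] using h1
    have hs : Real.sin (chT (n-1) ((k:ℕ)/2)) = 0 := by
      simpa [chD, show n-1 ≠ n-2 by omega] using h2
    have := Real.sin_sq_add_cos_sq (chT (n-1) ((k:ℕ)/2))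
    rw [hc, hs] at this
    norm_num at this
  · intro k l hkl
    have hk2 : (k:ℕ) < 2*n-2 := k.isLt
    have hl2 : (l:ℕ) < 2*n-2 := l.isLt
    have hne : (k:ℕ) ≠ (l:ℕ) := fun h => hkl (Fin.ext h)
    have hcase : (k:ℕ)/2 ≠ (l:ℕ)/2 ∨ ((l:ℕ)/2 = (k:ℕ)/2 ∧ (k:ℕ)%2 ≠ (l:ℕ)%2) := by
      omega
    have hLow : ∀ p ∈ {x | ∃ t : ℝ,
          x = chP n ((k:ℕ)/2) ((((k:ℕ) % 2 : ℕ)) : ℝ) 0 + t • chD n ((k:ℕ)/2)},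
        ∀ q ∈ {x | ∃ t : ℝ,
          x = chP n ((l:ℕ)/2) ((((l:ℕ) % 2 : ℕ)) : ℝ) 0 + t • chD n ((l:ℕ)/2)},
        1 ≤ dist p q := by
      rintro p ⟨t, rfl⟩ q ⟨s, rfl⟩
      rw [chP_line n hn, chP_line n hn, dist_chP n hn]
      refine le_trans (le_of_eq Real.sqrt_one.symm) (Real.sqrt_le_sqrt ?_)
      rcases hcase with hij | ⟨hj, hab⟩
      · rw [chV_sum (n-2) (by omega) _ _ (by omega) (by omega) hij]
        have : ∀ x y : ℝ, (1:ℝ) ≤ 1 + x^2 + y^2 := fun x y => by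
          nlinarith [sq_nonneg x, sq_nonneg y]
        exact this _ _
      · rw [hj]
        have h0 : ∑ r ∈ Finset.range (n-2),
            (chV (n-2) ((k:ℕ)/2) r - chV (n-2) ((k:ℕ)/2) r)^2 = 0 := by simp
        rw [h0]
        have hα : ((((k:ℕ) % 2 : ℕ) : ℝ) - (((l:ℕ) % 2 : ℕ) : ℝ))^2 = 1 := by
          rcases Nat.mod_two_eq_zero_or_one (k:ℕ) with h1 | h1 <;>
            rcases Nat.mod_two_eq_zero_or_one (l:ℕ) with h2 | h2 <;>
            rw [h1, h2] <;> first | (exfalso; omega) | norm_num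
        nlinarith [two_dim_sq (chT (n-1) ((k:ℕ)/2))
          ((((k:ℕ) % 2 : ℕ) : ℝ) - (((l:ℕ) % 2 : ℕ) : ℝ)) (t - s),
          hα, sq_nonneg (t - s)]
    refine ⟨?_, hLow, ?_⟩
    · rw [Set.eq_empty_iff_forall_notMem]
      rintro x ⟨hx1, hx2⟩
      have := hLow x hx1 x hx2
      rw [dist_self] at this
      linarith
    · rcases hcase with hij | ⟨hj, hab⟩
      · obtain ⟨t, s, hts⟩ := dist_cross n hn ((k:ℕ)/2) ((l:ℕ)/2)
          (by omega) (by omega) hij (((k:ℕ) % 2 : ℕ) : ℝ) (((l:ℕ) % 2 : ℕ) : ℝ)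
        exact ⟨_, ⟨t, (chP_line n hn _ _ t).symm⟩, _, ⟨s, (chP_line n hn _ _ s).symm⟩, hts⟩
      · refine ⟨chP n ((k:ℕ)/2) (((k:ℕ) % 2 : ℕ) : ℝ) 0,
          ⟨0, (chP_line n hn _ _ 0).symm⟩,
          chP n ((l:ℕ)/2) (((l:ℕ) % 2 : ℕ) : ℝ) 0,
          ⟨0, (chP_line n hn _ _ 0).symm⟩, ?_⟩
        rw [hj]
        apply dist_par n hn
        rcases Nat.mod_two_eq_zero_or_one (k:ℕ) with h1 | h1 <;>
          rcases Nat.mod_two_eq_zero_or_one (l:ℕ) with h2 | h2 <;>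
          rw [h1, h2] <;> first | (exfalso; omega) | norm_num
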